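/- Under the hypotheses of the state-wise policy improvement lemma (finite MDP; value functions V₁, V₂ of policies π₁, π₂ satisfying their Bellman equations; A₂ the advantage of π₂; and ∑_a π₁(a|s) A₂(s,a) ≥ 0 for every state s), if additionally there is a state s₀ with ∑_a π₁(a|s₀) A₂(s₀,a) > 0, then V₁(s₀) > V₂(s₀). (Strict policy improvement, proved as part of Lemma B.1 on strict improvement under PPO-Clip.) -/
import Mathlib


/-- Strict policy improvement: under the hypotheses of the state-wise policy
improvement lemma, if moreover `∑_a π₁(a|s₀) A^{π₂}(s₀,a) > 0` at some state `s₀`,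
then `V^{π₁}(s₀) > V^{π₂}(s₀)`. -/
theorem strict_policy_improvement
    {S 𝒜 : Type*} [Fintype S] [Fintype 𝒜] [Nonempty S] [Nonempty 𝒜]
    (P : S → 𝒜 → S → ℝ) (r : S → 𝒜 → ℝ) (γ : ℝ)
    (hγ0 : 0 < γ) (hγ1 : γ < 1)
    (hPnn : ∀ s a s', 0 ≤ P s a s') (hPsum : ∀ s a, ∑ s', P s a s' = 1)
    (π₁ π₂ : S → 𝒜 → ℝ)
    (hπ₁nn : ∀ s a, 0 ≤ π₁ s a) (hπ₁sum : ∀ s, ∑ a, π₁ s a = 1)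
    (hπ₂nn : ∀ s a, 0 ≤ π₂ s a) (hπ₂sum : ∀ s, ∑ a, π₂ s a = 1)
    (V₁ V₂ : S → ℝ)
    (hV₁ : ∀ s, V₁ s = ∑ a, π₁ s a * (r s a + γ * ∑ s', P s a s' * V₁ s'))
    (hV₂ : ∀ s, V₂ s = ∑ a, π₂ s a * (r s a + γ * ∑ s', P s a s' * V₂ s'))
    (A₂ : S → 𝒜 → ℝ)
    (hA₂ : ∀ s a, A₂ s a = r s a + γ * ∑ s', P s a s' * V₂ s' - V₂ s)
    (h : ∀ s, 0 ≤ ∑ a, π₁ s a * A₂ s a)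
    (s₀ : S) (hs₀ : 0 < ∑ a, π₁ s₀ a * A₂ s₀ a) :
    V₂ s₀ < V₁ s₀ := by
  set W : S → ℝ := fun s => V₁ s - V₂ s with hWdef
  -- Bellman-type recursion for W
  have hW : ∀ s, W s = (∑ a, π₁ s a * A₂ s a)
      + γ * ∑ a, π₁ s a * ∑ s', P s a s' * W s' := by
    intro s
    have h1 : W s = ∑ a, π₁ s a * (r s a + γ * ∑ s', P s a s' * V₁ s' - V₂ s) := by
      have e : ∑ a, π₁ s a * (r s a + γ * ∑ s', P s a s' * V₁ s' - V₂ s)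
          = (∑ a, π₁ s a * (r s a + γ * ∑ s', P s a s' * V₁ s'))
            - (∑ a, π₁ s a) * V₂ s := by
        rw [Finset.sum_mul, ← Finset.sum_sub_distrib]
        exact Finset.sum_congr rfl fun a _ => by ring
      rw [e, hπ₁sum, one_mul, ← hV₁]
    rw [h1]
    have : ∀ a, π₁ s a * (r s a + γ * ∑ s', P s a s' * V₁ s' - V₂ s)
        = π₁ s a * A₂ s a + γ * (π₁ s a * ∑ s', P s a s' * W s') := by
      intro a
      rw [hA₂ s a]
      have hsplit : ∑ s', P s a s' * W s'
          = (∑ s', P s a s' * V₁ s') - ∑ s', P s a s' * V₂ s' := by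
        rw [← Finset.sum_sub_distrib]
        apply Finset.sum_congr rfl
        intro s' _
        simp [hWdef]; ring
      rw [hsplit]; ring
    rw [Finset.sum_congr rfl (fun a _ => this a), Finset.sum_add_distrib,
      ← Finset.mul_sum]
  -- W is nonnegative
  have hWnn : ∀ s, 0 ≤ W s := by
    obtain ⟨sm, _, hsm⟩ := Finset.exists_min_image Finset.univ W ⟨Classical.arbitrary S, Finset.mem_univ _⟩
    have hmin : ∀ s, W sm ≤ W s := fun s => hsm s (Finset.mem_univ s)
    have key : γ * W sm ≤ W sm := by
      have hinner : ∀ a, W sm ≤ ∑ s', P sm a s' * W s' := by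
        intro a
        calc W sm = ∑ s', P sm a s' * W sm := by
              rw [← Finset.sum_mul, hPsum, one_mul]
          _ ≤ ∑ s', P sm a s' * W s' :=
              Finset.sum_le_sum fun s' _ =>
                mul_le_mul_of_nonneg_left (hmin s') (hPnn sm a s')
      have h2 : W sm ≤ ∑ a, π₁ sm a * ∑ s', P sm a s' * W s' := by
        calc W sm = ∑ a, π₁ sm a * W sm := by
              rw [← Finset.sum_mul, hπ₁sum, one_mul]
          _ ≤ _ := Finset.sum_le_sum fun a _ =>
              mul_le_mul_of_nonneg_left (hinner a) (hπ₁nn sm a)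
      calc γ * W sm ≤ γ * ∑ a, π₁ sm a * ∑ s', P sm a s' * W s' :=
            mul_le_mul_of_nonneg_left h2 hγ0.le
        _ ≤ (∑ a, π₁ sm a * A₂ sm a) + γ * ∑ a, π₁ sm a * ∑ s', P sm a s' * W s' :=
            le_add_of_nonneg_left (h sm)
        _ = W sm := (hW sm).symm
    have : 0 ≤ (1 - γ) * W sm := by nlinarith
    have hWsm : 0 ≤ W sm := nonneg_of_mul_nonneg_right this (by linarith)
    exact fun s => hWsm.trans (hmin s)
  -- conclude
  have hpos : 0 < W s₀ := by
    rw [hW s₀]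
    have : 0 ≤ γ * ∑ a, π₁ s₀ a * ∑ s', P s₀ a s' * W s' := by
      apply mul_nonneg hγ0.le
      apply Finset.sum_nonneg
      intro a _
      exact mul_nonneg (hπ₁nn s₀ a)
        (Finset.sum_nonneg fun s' _ => mul_nonneg (hPnn s₀ a s') (hWnn s'))
    linarith
  simpa [hWdef] using hpos
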